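/- Let q be a prime power, n coprime to q, θ a primitive n-th root of unity, s coprime to n, and t an integer with qt ≡ t (mod n). Then the map φ given by a(X) ↦ a(θ^t X^s) (mod X^n−1) is an algebra automorphism of F_q[X]/⟨X^n−1⟩ that preserves Hamming weight. -/

import Mathlib

open Polynomial

/-- The Hamming weight of an element of `F[X]/⟨X^n − 1⟩`: the number of nonzero
coefficients of its unique representative of degree `< n`. -/
noncomputable def hammingWt {F : Type*} [Field F] {n : ℕ} (hn : n ≠ 0)
    (x : AdjoinRoot (X ^ n - 1 : F[X])) : ℕ :=
  ((AdjoinRoot.modByMonicHom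
    (by simpa using monic_X_pow_sub_C (1 : F) hn : (X ^ n - 1 : F[X]).Monic)) x).support.card

section Aux

variable {F : Type*} [Field F]

lemma aux_pow_eq_pow_of_modEq {M : Type*} [Monoid M] {z : M} {n : ℕ} (hz : z ^ n = 1)
    {i j : ℕ} (h : i ≡ j [MOD n]) : z ^ i = z ^ j := by
  have key : ∀ k : ℕ, z ^ k = z ^ (k % n) := by
    intro k
    conv_lhs => rw [← Nat.div_add_mod k n]
    rw [pow_add, pow_mul, hz, one_pow, one_mul]
  rw [key i, key j, h]

lemma aux_mk_comp {f : F[X]} (p a : F[X]) :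
    AdjoinRoot.mk f (a.comp p) = aeval (AdjoinRoot.mk f p) a := by
  rw [aeval_def, Polynomial.comp, Polynomial.hom_eval₂, AdjoinRoot.algebraMap_eq]
  rfl

lemma aux_comp_CmulXpow (c c' : F) (k k' : ℕ) :
    (C c' * X ^ k').comp (C c * X ^ k) = C (c' * c ^ k') * X ^ (k * k') := by
  rw [mul_comp, C_comp, pow_comp, X_comp, mul_pow, ← C_pow, ← pow_mul, ← mul_assoc, ← C_mul]

lemma aux_comp_expand (a : F[X]) (c : F) (k : ℕ) :
    a.comp (C c * X ^ k) = ∑ i ∈ a.support, monomial (k * i) (c ^ i * a.coeff i) := by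
  rw [comp_eq_sum_left, Polynomial.sum]
  refine Finset.sum_congr rfl fun i _ => ?_
  rw [mul_pow, ← C_pow, ← pow_mul, ← mul_assoc, ← C_mul, C_mul_X_pow_eq_monomial, mul_comm (a.coeff i)]

lemma aux_modByMonic_sum_monomial {n : ℕ} (hn : 0 < n) (S : Finset ℕ) (e : ℕ → ℕ) (c : ℕ → F) :
    (∑ i ∈ S, monomial (e i) (c i)) %ₘ (X ^ n - 1) =
      ∑ i ∈ S, monomial (e i % n) (c i) := by
  have hg : (X ^ n - 1 : F[X]).Monic := by simpa using monic_X_pow_sub_C (1 : F) hn.ne'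
  have hdvd : (X ^ n - 1 : F[X]) ∣
      (∑ i ∈ S, monomial (e i) (c i)) - ∑ i ∈ S, monomial (e i % n) (c i) := by
    rw [← Finset.sum_sub_distrib]
    refine Finset.dvd_sum fun i _ => ?_
    have h1 : (X ^ n - 1 : F[X]) ∣ X ^ (e i) - X ^ (e i % n) := by
      have h2 := sub_dvd_pow_sub_pow (X ^ n : F[X]) 1 (e i / n)
      rw [one_pow, ← pow_mul] at h2
      refine h2.trans ⟨X ^ (e i % n), ?_⟩
      rw [sub_mul, one_mul, ← pow_add, Nat.div_add_mod]
    have h3 : (monomial (e i) (c i) : F[X]) - monomial (e i % n) (c i)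
        = C (c i) * (X ^ (e i) - X ^ (e i % n)) := by
      rw [mul_sub, C_mul_X_pow_eq_monomial, C_mul_X_pow_eq_monomial]
    rw [h3]
    exact h1.mul_left _
  have hdeg : (∑ i ∈ S, monomial (e i % n) (c i)).degree < (X ^ n - 1 : F[X]).degree := by
    have hdg : (X ^ n - 1 : F[X]).degree = n := by
      rw [show (1 : F[X]) = C 1 by simp]
      exact degree_X_pow_sub_C hn 1
    rw [hdg]
    refine lt_of_le_of_lt (degree_sum_le _ _) ?_
    rw [Finset.sup_lt_iff (by exact_mod_cast WithBot.bot_lt_coe n)]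
    intro i _
    refine lt_of_le_of_lt (degree_monomial_le _ _) ?_
    exact_mod_cast Nat.mod_lt _ hn
  have h0 : ((∑ i ∈ S, monomial (e i) (c i)) - ∑ i ∈ S, monomial (e i % n) (c i)) %ₘ
      (X ^ n - 1) = 0 := (modByMonic_eq_zero_iff_dvd hg).mpr hdvd
  rw [sub_modByMonic, sub_eq_zero] at h0
  rw [h0, (modByMonic_eq_self_iff hg).mpr hdeg]

lemma aux_support_card (p : F[X]) (σ : ℕ → ℕ) (u : ℕ → F)
    (hσ : ∀ i ∈ p.support, ∀ j ∈ p.support, σ i = σ j → i = j)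
    (hu : ∀ i ∈ p.support, u i ≠ 0) :
    (∑ i ∈ p.support, monomial (σ i) (u i * p.coeff i)).support.card = p.support.card := by
  have hsupp : (∑ i ∈ p.support, monomial (σ i) (u i * p.coeff i)).support
      = p.support.image σ := by
    ext k
    simp only [Finset.mem_image, mem_support_iff, finset_sum_coeff, coeff_monomial]
    constructor
    · intro h
      by_contra hc
      push_neg at hc
      refine h (Finset.sum_eq_zero fun i hi => ?_)
      exact if_neg fun he => hc i (mem_support_iff.mp hi) he
    · rintro ⟨i, hi, rfl⟩
      have hne : p.coeff i ≠ 0 := hi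
      rw [Finset.sum_eq_single_of_mem i (mem_support_iff.mpr hi) ?_]
      · rw [if_pos rfl]
        exact mul_ne_zero (hu i (mem_support_iff.mpr hi)) hne
      · intro j hj hjne
        exact if_neg fun he => hjne (hσ j hj i (mem_support_iff.mpr hi) he)
  rw [hsupp]
  exact Finset.card_image_of_injOn fun i hi j hj h => hσ i hi j hj h

end Aux

/-- for `s` coprime to `n` and `t` with `q·t ≡ t (mod n)` (so that
`θ^t` lies in `F_q`, i.e. `θ^t = algebraMap F E b` for some `b : F`), the map
`a(X) ↦ a(θ^t X^s) (mod X^n − 1)` is an algebra automorphism of `F_q[X]/⟨X^n−1⟩`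
preserving the Hamming weight. -/
theorem stmt1 (F : Type*) [Field F] [Fintype F] (n : ℕ) (hn : 0 < n)
    (hcop : Nat.Coprime (Fintype.card F) n)
    (E : Type*) [Field E] [Algebra F E] (θ : E) (hθ : IsPrimitiveRoot θ n)
    (s t : ℕ) (hs : Nat.Coprime s n) (ht : Fintype.card F * t ≡ t [MOD n])
    (b : F) (hb : algebraMap F E b = θ ^ t) :
    ∃ φ : AdjoinRoot (X ^ n - 1 : F[X]) ≃ₐ[F] AdjoinRoot (X ^ n - 1 : F[X]),
      (∀ a : F[X], φ (AdjoinRoot.mk _ a) = AdjoinRoot.mk _ (a.comp (C b * X ^ s))) ∧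
      (∀ x, hammingWt hn.ne' (φ x) = hammingWt hn.ne' x) := by
  have hgm : (X ^ n - 1 : F[X]).Monic := by simpa using monic_X_pow_sub_C (1 : F) hn.ne'
  have hbn : b ^ n = 1 := by
    apply (algebraMap F E).injective
    rw [map_pow, hb, map_one, ← pow_mul, mul_comm, pow_mul, hθ.pow_eq_one, one_pow]
  have hb0 : b ≠ 0 := fun h => by simp [h, zero_pow hn.ne'] at hbn
  have hbinv : (b⁻¹) ^ n = 1 := by rw [inv_pow, hbn, inv_one]
  -- the inverse exponent
  set s' : ℕ := s ^ (n.totient - 1) with hs'def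
  have htpos : 0 < n.totient := Nat.totient_pos.mpr hn
  have hss' : s * s' ≡ 1 [MOD n] := by
    have h1 : s * s' = s ^ n.totient := by
      rw [hs'def, ← pow_succ', Nat.sub_add_cancel htpos]
    rw [h1]
    exact Nat.ModEq.pow_totient hs
  -- basic facts in the quotient ring
  have hroot : (AdjoinRoot.root (X ^ n - 1 : F[X])) ^ n = 1 := by
    have h := AdjoinRoot.mk_self (f := (X ^ n - 1 : F[X]))
    rw [map_sub, map_one, map_pow, AdjoinRoot.mk_X, sub_eq_zero] at h
    exact h
  have hmkpow : ∀ (c : F) (k : ℕ), c ^ n = 1 →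
      (AdjoinRoot.mk (X ^ n - 1 : F[X]) (C c * X ^ k)) ^ n = 1 := by
    intro c k hc
    rw [← map_pow, mul_pow, ← C_pow, hc, map_one, one_mul, ← pow_mul, map_pow,
      AdjoinRoot.mk_X, mul_comm, pow_mul, hroot, one_pow]
  have haev : ∀ (c : F) (k : ℕ), c ^ n = 1 →
      aeval (AdjoinRoot.mk (X ^ n - 1 : F[X]) (C c * X ^ k)) (X ^ n - 1 : F[X]) = 0 := by
    intro c k hc
    rw [map_sub, map_pow, aeval_X, map_one, hmkpow c k hc, sub_self]
  set c' : F := b⁻¹ ^ s' with hc'def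
  have hc'n : c' ^ n = 1 := by rw [hc'def, ← pow_mul, mul_comm, pow_mul, hbinv, one_pow]
  let f1 : AdjoinRoot (X ^ n - 1 : F[X]) →ₐ[F] AdjoinRoot (X ^ n - 1 : F[X]) :=
    AdjoinRoot.liftAlgHom _ (Algebra.ofId F _) (AdjoinRoot.mk _ (C b * X ^ s)) (haev b s hbn)
  let f2 : AdjoinRoot (X ^ n - 1 : F[X]) →ₐ[F] AdjoinRoot (X ^ n - 1 : F[X]) :=
    AdjoinRoot.liftAlgHom _ (Algebra.ofId F _) (AdjoinRoot.mk _ (C c' * X ^ s')) (haev c' s' hc'n)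
  have hf1 : ∀ a : F[X], f1 (AdjoinRoot.mk _ a) = AdjoinRoot.mk _ (a.comp (C b * X ^ s)) := by
    intro a
    show AdjoinRoot.liftAlgHom _ (Algebra.ofId F _) _ (haev b s hbn) (AdjoinRoot.mk _ a) = _
    refine (AdjoinRoot.liftAlgHom_mk _ _ _ _ a).trans ?_
    exact (aux_mk_comp _ a).symm
  have hf2 : ∀ a : F[X], f2 (AdjoinRoot.mk _ a) = AdjoinRoot.mk _ (a.comp (C c' * X ^ s')) := by
    intro a
    show AdjoinRoot.liftAlgHom _ (Algebra.ofId F _) _ (haev c' s' hc'n) (AdjoinRoot.mk _ a) = _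
    refine (AdjoinRoot.liftAlgHom_mk _ _ _ _ a).trans ?_
    exact (aux_mk_comp _ a).symm
  have hcomp1 : f1.comp f2 = AlgHom.id F _ := by
    apply AdjoinRoot.algHom_ext
    rw [AlgHom.comp_apply, AlgHom.id_apply, ← AdjoinRoot.mk_X (f := (X ^ n - 1 : F[X])),
      hf2, X_comp, hf1, aux_comp_CmulXpow]
    have h1 : c' * b ^ s' = 1 := by
      rw [hc'def, ← mul_pow, inv_mul_cancel₀ hb0, one_pow]
    rw [h1, map_one, one_mul, map_pow, AdjoinRoot.mk_X,
      aux_pow_eq_pow_of_modEq hroot hss', pow_one]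
  have hcomp2 : f2.comp f1 = AlgHom.id F _ := by
    apply AdjoinRoot.algHom_ext
    rw [AlgHom.comp_apply, AlgHom.id_apply, ← AdjoinRoot.mk_X (f := (X ^ n - 1 : F[X])),
      hf1, X_comp, hf2, aux_comp_CmulXpow]
    have h1 : b * c' ^ s = 1 := by
      rw [hc'def, ← pow_mul, mul_comm s' s,
        aux_pow_eq_pow_of_modEq hbinv hss', pow_one, mul_inv_cancel₀ hb0]
    have h2 : s' * s ≡ 1 [MOD n] := by rwa [mul_comm] at hss'
    rw [h1, map_one, one_mul, map_pow, AdjoinRoot.mk_X,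
      aux_pow_eq_pow_of_modEq hroot h2, pow_one]
  refine ⟨AlgEquiv.ofAlgHom f1 f2 hcomp1 hcomp2, hf1, ?_⟩
  -- weight preservation
  intro x
  set a : F[X] := AdjoinRoot.modByMonicHom hgm x with ha
  have hmk : AdjoinRoot.mk _ a = x := AdjoinRoot.mk_leftInverse hgm x
  have hma : a %ₘ (X ^ n - 1) = a := by
    have h := AdjoinRoot.modByMonicHom_mk hgm a
    rw [hmk, ← ha] at h
    exact h.symm
  have hdg : (X ^ n - 1 : F[X]).degree = n := by
    rw [show (1 : F[X]) = C 1 by simp]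
    exact degree_X_pow_sub_C hn 1
  have hdeg : ∀ i ∈ a.support, i < n := by
    intro i hi
    have h1 : (i : WithBot ℕ) ≤ a.degree := le_degree_of_ne_zero (mem_support_iff.mp hi)
    have h2 : a.degree < n := by
      rw [← hma, ← hdg]
      exact degree_modByMonic_lt a hgm
    exact_mod_cast h1.trans_lt h2
  have hinj : ∀ i ∈ a.support, ∀ j ∈ a.support, (s * i) % n = (s * j) % n → i = j := by
    intro i hi j hj h
    have h1 : i ≡ j [MOD n] := Nat.ModEq.cancel_left_of_coprime hs.symm h
    have h2 : i % n = j % n := h1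
    rwa [Nat.mod_eq_of_lt (hdeg i hi), Nat.mod_eq_of_lt (hdeg j hj)] at h2
  show hammingWt hn.ne' (f1 x) = hammingWt hn.ne' x
  unfold hammingWt
  rw [← hmk, hf1, AdjoinRoot.modByMonicHom_mk, AdjoinRoot.modByMonicHom_mk, hma,
    aux_comp_expand, aux_modByMonic_sum_monomial hn]
  exact aux_support_card a (fun i => (s * i) % n) (fun i => b ^ i) hinj
    (fun i _ => pow_ne_zero _ hb0)
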